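/- arXiv:2103.04561 — 2 statements merged into one kernel-verified Lean document; each statement's English description precedes it below -/
import Mathlib

section
/- Euler's pentagonal number theorem in theta form: η(τ) = q^{1/24} ∏_{n≥1}(1 - qⁿ) = q^{1/24} ∑_{n∈ℤ} (-1)ⁿ q^{n(3n+1)/2} = e^{-iπ/6} θ[1/6; 1/2](0; 3τ), where θ[a;b](0;τ) = ∑_{n∈ℤ} e^{2πi(n+a)b} q^{(1/2)(n+a)²}. -/
open Complex Finset Filter Topology

noncomputable section

namespace PNT16

/-- Partial products `∏_{i=1}^n (1 - x^i)`. -/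
def pp (x : ℂ) (n : ℕ) : ℂ := ∏ i ∈ Finset.range n, (1 - x ^ (i + 1))

/-- Gaussian binomial coefficient, defined by the q-Pascal recursion. -/
def gb (Q : ℂ) : ℕ → ℕ → ℂ
  | 0, 0 => 1
  | 0, _ + 1 => 0
  | _ + 1, 0 => 1
  | N + 1, k + 1 => gb Q N (k + 1) + Q ^ (N - k) * gb Q N k

lemma gb_zero_right (Q : ℂ) (N : ℕ) : gb Q N 0 = 1 := by
  cases N <;> rfl

lemma gb_eq_zero (Q : ℂ) : ∀ N k, N < k → gb Q N k = 0 := by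
  intro N
  induction N with
  | zero => intro k hk; match k, hk with | k + 1, _ => rfl
  | succ N ih =>
    intro k hk
    match k, hk with
    | k + 1, hk =>
      rw [gb, ih _ (by omega), ih _ (by omega)]
      ring

lemma gb_diag (Q : ℂ) : ∀ N, gb Q N N = 1 := by
  intro N
  induction N with
  | zero => rfl
  | succ N ih => rw [gb, ih, gb_eq_zero Q N (N + 1) (by omega)]; simp

lemma two_mul_choose_two (k : ℕ) : 2 * k.choose 2 = k * (k - 1) := by
  induction k with
  | zero => rfl
  | succ k ih =>
    rw [Nat.choose_succ_succ, Nat.choose_one_right, Nat.mul_add, ih]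
    rcases k with _ | k
    · rfl
    · simp only [Nat.succ_sub_one]
      ring

lemma choose_two_succ (k : ℕ) : (k + 1).choose 2 = k.choose 2 + k := by
  rw [Nat.choose_succ_succ, Nat.choose_one_right, Nat.add_comm]

/-- Cauchy's q-binomial theorem. -/
lemma cauchy (Q : ℂ) : ∀ (N : ℕ) (z : ℂ),
    ∏ j ∈ Finset.range N, (1 + z * Q ^ j)
      = ∑ k ∈ Finset.range (N + 1), Q ^ (k.choose 2) * gb Q N k * z ^ k := by
  intro N
  induction N with
  | zero => intro z; simp [gb]
  | succ N ih =>
    intro z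
    rw [Finset.prod_range_succ, ih]
    rw [Finset.sum_range_succ' (fun k => Q ^ (k.choose 2) * gb Q (N + 1) k * z ^ k) (N + 1)]
    have h0 : gb Q (N + 1) 0 = 1 := gb_zero_right Q (N + 1)
    simp only [h0, gb]
    have expand : ∀ k ∈ Finset.range (N + 1),
        Q ^ ((k + 1).choose 2) * (gb Q N (k + 1) + Q ^ (N - k) * gb Q N k) * z ^ (k + 1)
          = Q ^ ((k + 1).choose 2) * gb Q N (k + 1) * z ^ (k + 1)
            + Q ^ N * (Q ^ (k.choose 2) * gb Q N k * z ^ k) * z := by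
      intro k hk
      have hkN : k ≤ N := by simpa using Nat.lt_succ_iff.mp (Finset.mem_range.mp hk)
      have hexp : (k + 1).choose 2 + (N - k) = k.choose 2 + N := by
        rw [choose_two_succ]; omega
      have : Q ^ ((k + 1).choose 2) * Q ^ (N - k) = Q ^ (k.choose 2) * Q ^ N := by
        rw [← pow_add, ← pow_add, hexp]
      linear_combination gb Q N k * z ^ (k + 1) * this
    rw [Finset.sum_congr rfl expand, Finset.sum_add_distrib]
    have top : Q ^ ((N + 1).choose 2) * gb Q N (N + 1) * z ^ (N + 1) = 0 := by
      rw [gb_eq_zero Q N (N + 1) (by omega)]; ring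
    have shift : ∑ k ∈ Finset.range (N + 1), Q ^ ((k + 1).choose 2) * gb Q N (k + 1) * z ^ (k + 1)
        = ∑ k ∈ Finset.range (N + 1), Q ^ (k.choose 2) * gb Q N k * z ^ k - 1 := by
      have h1 := Finset.sum_range_succ' (fun k => Q ^ (k.choose 2) * gb Q N k * z ^ k) (N + 1)
      have h2 := Finset.sum_range_succ (fun k => Q ^ (k.choose 2) * gb Q N k * z ^ k) (N + 1)
      simp only [gb_zero_right, pow_zero, mul_one, one_mul] at h1 h2
      rw [h2, top, add_zero] at h1
      have h3 : ∑ k ∈ Finset.range (N + 1), Q ^ ((k + 1).choose 2) * gb Q N (k + 1) * z ^ (k + 1)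
          = ∑ x ∈ Finset.range (N + 1),
              Q ^ ((x + 1).choose 2) * gb Q N (x + 1) * z ^ (x + 1) := rfl
      rw [h3]
      simp only [show Nat.choose 0 2 = 0 from rfl, pow_zero] at h1 ⊢
      linear_combination -h1
    rw [shift]
    have h4 : ∑ x ∈ Finset.range (N + 1), Q ^ N * (Q ^ (x.choose 2) * gb Q N x * z ^ x) * z
        = (Q ^ N * z) * ∑ k ∈ Finset.range (N + 1), Q ^ (k.choose 2) * gb Q N k * z ^ k := by
      rw [Finset.mul_sum]
      exact Finset.sum_congr rfl fun x _ => by ring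
    rw [h4]
    simp only [show Nat.choose 0 2 = 0 from rfl, pow_zero]
    ring

/-- Product formula for the Gaussian binomial. -/
lemma gb_formula (Q : ℂ) : ∀ N k d, N = k + d → gb Q N k * (pp Q k * pp Q d) = pp Q N := by
  intro N
  induction N with
  | zero =>
    intro k d h
    obtain ⟨rfl, rfl⟩ : k = 0 ∧ d = 0 := by omega
    simp [gb, pp]
  | succ N ih =>
    intro k d h
    match k with
    | 0 =>
      have : d = N + 1 := by omega
      subst this
      simp [gb_zero_right, pp]
    | k + 1 =>
      match d with
      | 0 =>
        have : k = N := by omega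
        subst this
        rw [gb_diag]
        simp [pp]
      | d + 1 =>
        have hN : N = (k + 1) + d := by omega
        have hN' : N = k + (d + 1) := by omega
        have e1 := ih (k + 1) d hN
        have e2 := ih k (d + 1) hN'
        have hrec : gb Q (N + 1) (k + 1) = gb Q N (k + 1) + Q ^ (d + 1) * gb Q N k := by
          have hdk : N - k = d + 1 := by omega
          rw [gb, hdk]
        have hppk : pp Q (k + 1) = pp Q k * (1 - Q ^ (k + 1)) := Finset.prod_range_succ _ k
        have hppd : pp Q (d + 1) = pp Q d * (1 - Q ^ (d + 1)) := Finset.prod_range_succ _ d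
        have hppN : pp Q (N + 1) = pp Q N * (1 - Q ^ (N + 1)) := Finset.prod_range_succ _ N
        rw [hrec, hppN, add_mul]
        calc gb Q N (k + 1) * (pp Q (k + 1) * pp Q (d + 1))
              + Q ^ (d + 1) * gb Q N k * (pp Q (k + 1) * pp Q (d + 1))
            = (gb Q N (k + 1) * (pp Q (k + 1) * pp Q d)) * (1 - Q ^ (d + 1))
              + Q ^ (d + 1) * (gb Q N k * (pp Q k * pp Q (d + 1))) * (1 - Q ^ (k + 1)) := by
              rw [hppd, hppk]; ring
          _ = pp Q N * ((1 - Q ^ (d + 1)) + Q ^ (d + 1) * (1 - Q ^ (k + 1))) := by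
              rw [e1, e2]; ring
          _ = pp Q N * (1 - Q ^ (N + 1)) := by
              have : Q ^ (d + 1) * Q ^ (k + 1) = Q ^ (N + 1) := by
                rw [← pow_add]; congr 1; omega
              rw [← this]; ring

end PNT16

namespace PNT16X
open PNT16

/-- `pent m = m (3m-1)/2`. -/
def pent (m : ℤ) : ℤ := m * (3 * m - 1) / 2

lemma two_mul_pent (m : ℤ) : 2 * pent m = m * (3 * m - 1) := by
  apply Int.mul_ediv_cancel'
  rcases Int.even_or_odd m with ⟨t, ht⟩ | ⟨t, ht⟩
  · exact ⟨t * (3 * m - 1), by rw [ht]; ring⟩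
  · exact ⟨m * (3 * t + 1), by rw [ht]; ring⟩

lemma pent_ge_natAbs (m : ℤ) : (m.natAbs : ℤ) ≤ pent m := by
  have h := two_mul_pent m
  rcases le_or_gt 0 m with hm | hm
  · rw [Int.natAbs_of_nonneg hm]
    rcases eq_or_lt_of_le hm with h0 | h0
    · simp [← h0] at h ⊢; omega
    · nlinarith [mul_nonneg (by omega : (0:ℤ) ≤ m) (by omega : (0:ℤ) ≤ 3 * m - 3)]
  · rw [Int.ofNat_natAbs_of_nonpos (le_of_lt hm)]
    nlinarith [mul_nonneg (by omega : (0:ℤ) ≤ -m) (by omega : (0:ℤ) ≤ -(3 * m + 1))]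

lemma pent_nonneg (m : ℤ) : 0 ≤ pent m :=
  le_trans (by positivity) (pent_ge_natAbs m)

lemma pp_succ (x : ℂ) (m : ℕ) : pp x (m + 1) = pp x m * (1 - x ^ (m + 1)) :=
  Finset.prod_range_succ _ m

lemma triple (q : ℂ) : ∀ n : ℕ,
    (∏ i ∈ Finset.range n, ((1 - q ^ (3 * i + 1)) * (1 - q ^ (3 * i + 2)))) * pp (q ^ 3) n
      = pp q (3 * n) := by
  intro n
  induction n with
  | zero => simp [pp]
  | succ n ih =>
    have h3 : 3 * (n + 1) = (3 * n + 1 + 1) + 1 := by ring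
    rw [h3, pp_succ, pp_succ, pp_succ, Finset.prod_range_succ, pp_succ, ← ih]
    have hQ : (q ^ 3) ^ (n + 1) = q ^ (3 * n + 1 + 1 + 1) := by
      rw [← pow_mul]; ring_nf
    rw [hQ]
    ring

lemma prod_zpow_sum (q : ℂ) (hq : q ≠ 0) (n : ℕ) (f : ℕ → ℤ) :
    ∏ j ∈ Finset.range n, q ^ (f j) = q ^ (∑ j ∈ Finset.range n, f j) := by
  induction n with
  | zero => simp
  | succ n ih => rw [Finset.prod_range_succ, Finset.sum_range_succ, ih, zpow_add₀ hq]

lemma sum_T (n : ℕ) : 2 * ∑ j ∈ Finset.range n, (3 * (j : ℤ) + 1) = 3 * n ^ 2 - n := by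
  induction n with
  | zero => simp
  | succ n ih =>
    rw [Finset.sum_range_succ, mul_add, ih]
    push_cast
    ring

/-- The key finite identity: specialization of Cauchy's q-binomial theorem. -/
lemma key (q : ℂ) (hq0 : q ≠ 0) (n : ℕ) :
    pp q (3 * n) = ∑ k ∈ Finset.range (2 * n + 1),
      (-1 : ℂ) ^ (k + n) * q ^ (pent ((k : ℤ) - n)) * (gb (q ^ 3) (2 * n) k * pp (q ^ 3) n) := by
  set z : ℂ := -(q ^ ((1 : ℤ) - 3 * n)) with hz
  have hc := cauchy (q ^ 3) (2 * n) z
  have hfac : ∀ j : ℕ, 1 + z * (q ^ 3) ^ j = 1 - q ^ (3 * (j : ℤ) + 1 - 3 * n) := by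
    intro j
    rw [hz]
    have h1 : (q ^ 3) ^ j = q ^ ((3 * j : ℕ) : ℤ) := by
      rw [zpow_natCast, ← pow_mul]
    rw [h1, neg_mul, ← zpow_add₀ hq0]
    have he : (1 : ℤ) - 3 * n + (3 * j : ℕ) = 3 * (j : ℤ) + 1 - 3 * n := by push_cast; ring
    rw [he]
    ring
  have hsplit : ∏ j ∈ Finset.range (2 * n), (1 + z * (q ^ 3) ^ j)
      = (∏ j ∈ Finset.range n, (1 - q ^ (3 * (j : ℤ) + 1 - 3 * n)))
        * ∏ j ∈ Finset.range n, (1 - q ^ (3 * j + 1)) := by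
    have h2n : 2 * n = n + n := by ring
    rw [h2n, Finset.prod_range_add]
    congr 1
    · exact Finset.prod_congr rfl fun j _ => hfac j
    · refine Finset.prod_congr rfl fun j hj => ?_
      rw [hfac (n + j)]
      congr 1
      have h2 : 3 * ((n + j : ℕ) : ℤ) + 1 - 3 * n = ((3 * j + 1 : ℕ) : ℤ) := by push_cast; ring
      rw [h2, zpow_natCast]
  have hneg : ∀ j ∈ Finset.range n, (1 : ℂ) - q ^ (3 * (j : ℤ) + 1 - 3 * n)
      = (-q ^ (3 * (j : ℤ) + 1 - 3 * n)) * (1 - q ^ ((3 * (n - 1 - j) + 2 : ℕ))) := by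
    intro j hj
    have hjn : j < n := Finset.mem_range.mp hj
    have hcast : ((3 * (n - 1 - j) + 2 : ℕ) : ℤ) = 3 * (n : ℤ) - 3 * j - 1 := by
      push_cast [Nat.sub_sub]
      omega
    rw [← zpow_natCast q (3 * (n - 1 - j) + 2), hcast]
    have hab : q ^ (3 * (j : ℤ) + 1 - 3 * n) * q ^ (3 * (n : ℤ) - 3 * j - 1) = 1 := by
      rw [← zpow_add₀ hq0]
      have he0 : 3 * (j : ℤ) + 1 - 3 * n + (3 * (n : ℤ) - 3 * j - 1) = 0 := by ring
      rw [he0, zpow_zero]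
    linear_combination (-1 : ℂ) * hab
  have hrefl : ∏ j ∈ Finset.range n, (1 - q ^ ((3 * (n - 1 - j) + 2 : ℕ)))
      = ∏ j ∈ Finset.range n, (1 - q ^ (3 * j + 2)) :=
    Finset.prod_range_reflect (fun i => 1 - q ^ (3 * i + 2)) n
  set s : ℤ := ∑ j ∈ Finset.range n, (3 * (j : ℤ) + 1 - 3 * n) with hs
  have h2s : 2 * s = -(3 * (n : ℤ) ^ 2 + n) := by
    rw [hs, Finset.sum_sub_distrib, Finset.sum_const, Finset.card_range, mul_sub, sum_T]
    push_cast
    ring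
  have hprodneg : ∏ j ∈ Finset.range n, (-q ^ (3 * (j : ℤ) + 1 - 3 * n))
      = (-1 : ℂ) ^ n * q ^ s := by
    calc ∏ j ∈ Finset.range n, (-q ^ (3 * (j : ℤ) + 1 - 3 * n))
        = ∏ j ∈ Finset.range n, ((-1 : ℂ) * q ^ (3 * (j : ℤ) + 1 - 3 * n)) :=
          Finset.prod_congr rfl fun j _ => by ring
      _ = (-1 : ℂ) ^ n * q ^ s := by
          rw [Finset.prod_mul_distrib, Finset.prod_const, Finset.card_range,
            prod_zpow_sum q hq0 n _]
  have hL : ∏ j ∈ Finset.range (2 * n), (1 + z * (q ^ 3) ^ j)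
      = (-1 : ℂ) ^ n * q ^ s
        * ∏ j ∈ Finset.range n, ((1 - q ^ (3 * j + 1)) * (1 - q ^ (3 * j + 2))) := by
    rw [hsplit, Finset.prod_congr rfl hneg, Finset.prod_mul_distrib, hprodneg, hrefl,
      Finset.prod_mul_distrib]
    ring
  have hunit : ((-1 : ℂ) ^ n * q ^ s) * ((-1 : ℂ) ^ n * q ^ (-s)) = 1 := by
    have e1 : (-1 : ℂ) ^ n * (-1 : ℂ) ^ n = 1 := by
      rw [← pow_add, ← two_mul, pow_mul]
      norm_num
    have e2 : q ^ s * q ^ (-s) = 1 := by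
      rw [← zpow_add₀ hq0, add_neg_cancel, zpow_zero]
    calc ((-1 : ℂ) ^ n * q ^ s) * ((-1 : ℂ) ^ n * q ^ (-s))
        = ((-1 : ℂ) ^ n * (-1 : ℂ) ^ n) * (q ^ s * q ^ (-s)) := by ring
      _ = 1 := by rw [e1, e2, mul_one]
  have hgoal0 : pp q (3 * n) = (-1 : ℂ) ^ n * q ^ (-s) *
      ((∑ k ∈ Finset.range (2 * n + 1),
          (q ^ 3) ^ (k.choose 2) * gb (q ^ 3) (2 * n) k * z ^ k) * pp (q ^ 3) n) := by
    rw [← hc, hL, ← triple q n]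
    calc (∏ i ∈ Finset.range n, ((1 - q ^ (3 * i + 1)) * (1 - q ^ (3 * i + 2)))) * pp (q ^ 3) n
        = (((-1 : ℂ) ^ n * q ^ s) * ((-1 : ℂ) ^ n * q ^ (-s)))
          * ((∏ i ∈ Finset.range n, ((1 - q ^ (3 * i + 1)) * (1 - q ^ (3 * i + 2))))
            * pp (q ^ 3) n) := by rw [hunit, one_mul]
      _ = _ := by ring
  rw [hgoal0, Finset.sum_mul, Finset.mul_sum]
  refine Finset.sum_congr rfl fun k hk => ?_
  have hzk : z ^ k = (-1 : ℂ) ^ k * q ^ (((1 : ℤ) - 3 * n) * k) := by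
    rw [hz, neg_pow, ← zpow_natCast (q ^ ((1 : ℤ) - 3 * n)) k, ← zpow_mul]
  have hQC : ((q : ℂ) ^ 3) ^ (k.choose 2) = q ^ ((3 * k.choose 2 : ℕ) : ℤ) := by
    rw [zpow_natCast, ← pow_mul]
  have hC : 2 * ((k.choose 2 : ℕ) : ℤ) = (k : ℤ) * ((k : ℤ) - 1) := by
    rcases k with _ | k'
    · simp
    · have h := two_mul_choose_two (k' + 1)
      simp only [Nat.add_sub_cancel] at h
      have h2 : (2 * ((k' + 1).choose 2) : ℤ) = ((k' + 1) * k' : ℕ) := by exact_mod_cast h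
      push_cast at h2 ⊢
      linear_combination h2
  have hexp : -s + ((3 * k.choose 2 : ℕ) : ℤ) + ((1 : ℤ) - 3 * n) * k = pent ((k : ℤ) - n) := by
    have h2 : 2 * (-s + ((3 * k.choose 2 : ℕ) : ℤ) + ((1 : ℤ) - 3 * n) * k)
        = 2 * pent ((k : ℤ) - n) := by
      rw [two_mul_pent]
      push_cast
      push_cast at hC
      linear_combination (-1 : ℤ) * h2s + 3 * hC
    omega
  have hqq : q ^ (pent ((k : ℤ) - n))
      = q ^ (-s) * q ^ ((3 * k.choose 2 : ℕ) : ℤ) * q ^ (((1 : ℤ) - 3 * n) * k) := by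
    rw [← hexp, zpow_add₀ hq0, zpow_add₀ hq0]
  have hsign : (-1 : ℂ) ^ (k + n) = (-1 : ℂ) ^ n * (-1 : ℂ) ^ k := by
    rw [pow_add]; ring
  rw [hzk, hQC, hqq, hsign]
  ring

end PNT16X

namespace PNT16A
open PNT16 PNT16X

lemma factor_ne_zero {x : ℂ} (hx : ‖x‖ < 1) (i : ℕ) : (1 : ℂ) - x ^ (i + 1) ≠ 0 := by
  intro h
  have hx1 : x ^ (i + 1) = 1 := by linear_combination -h
  have h2 : ‖x ^ (i + 1)‖ < 1 := by
    rw [norm_pow]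
    exact pow_lt_one₀ (norm_nonneg x) hx (by omega)
  rw [hx1] at h2
  simp at h2

lemma log_summable {x : ℂ} (hx : ‖x‖ < 1) :
    Summable (fun i : ℕ => Complex.log (1 - x ^ (i + 1))) := by
  have hgeo : Summable (fun i : ℕ => (3 / 2 : ℝ) * ‖x‖ ^ (i + 1)) := by
    have h0 : Summable (fun i : ℕ => ‖x‖ ^ i) :=
      summable_geometric_of_lt_one (norm_nonneg x) hx
    exact Summable.congr ((h0.mul_left ((3 / 2 : ℝ) * ‖x‖)))
      (fun i => by rw [pow_succ]; ring)
  refine Summable.of_norm_bounded_eventually_nat hgeo ?_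
  have htend : Filter.Tendsto (fun i : ℕ => ‖x‖ ^ (i + 1)) Filter.atTop (nhds 0) := by
    have h1 := tendsto_pow_atTop_nhds_zero_of_lt_one (norm_nonneg x) hx
    exact h1.comp (Filter.tendsto_add_atTop_nat 1)
  filter_upwards [htend.eventually_le_const (by norm_num : (0:ℝ) < 1/2)] with i hi
  have h1 : ‖-(x ^ (i + 1))‖ ≤ 1 / 2 := by rwa [norm_neg, norm_pow]
  have h2 := Complex.norm_log_one_add_half_le_self h1
  rw [show (1 : ℂ) + -(x ^ (i + 1)) = 1 - x ^ (i + 1) by ring] at h2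
  rw [norm_neg, norm_pow] at h2
  exact h2

lemma mult_tprod {x : ℂ} (hx : ‖x‖ < 1) :
    Multipliable (fun i : ℕ => 1 - x ^ (i + 1)) ∧ (∏' i : ℕ, (1 - x ^ (i + 1))) ≠ 0 := by
  have hne : ∀ i : ℕ, (1 : ℂ) - x ^ (i + 1) ≠ 0 := factor_ne_zero hx
  have hlog := log_summable hx
  constructor
  · exact Complex.multipliable_of_summable_log hlog
  · have h2 := Complex.cexp_tsum_eq_tprod hne hlog
    rw [← h2]
    exact Complex.exp_ne_zero _

lemma pp_ne_zero {x : ℂ} (hx : ‖x‖ < 1) (j : ℕ) : pp x j ≠ 0 :=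
  Finset.prod_ne_zero_iff.mpr fun i _ => factor_ne_zero hx i

lemma gb_div (Q : ℂ) (hQ : ‖Q‖ < 1) {N k d : ℕ} (h : N = k + d) :
    gb Q N k = pp Q N / (pp Q k * pp Q d) :=
  (eq_div_iff (mul_ne_zero (pp_ne_zero hQ k) (pp_ne_zero hQ d))).mpr (gb_formula Q N k d h)

/-- The pentagonal number theorem. -/
theorem pnt (q : ℂ) (hq0 : q ≠ 0) (hq1 : ‖q‖ < 1) :
    ∏' i : ℕ, (1 - q ^ (i + 1)) = ∑' m : ℤ, (-1 : ℂ) ^ m * q ^ (pent m) := by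
  have hq1' : (0 : ℝ) < ‖q‖ := norm_pos_iff.mpr hq0
  set Q : ℂ := q ^ 3 with hQdef
  have hQ1 : ‖Q‖ < 1 := by
    rw [hQdef, norm_pow]
    exact pow_lt_one₀ (norm_nonneg q) hq1 (by omega)
  obtain ⟨mQ, hLne⟩ := mult_tprod hQ1
  obtain ⟨mq, -⟩ := mult_tprod hq1
  set L : ℂ := ∏' i : ℕ, (1 - Q ^ (i + 1)) with hL
  set P : ℂ := ∏' i : ℕ, (1 - q ^ (i + 1)) with hP
  have htendQ : Filter.Tendsto (fun n => pp Q n) Filter.atTop (nhds L) :=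
    mQ.hasProd.tendsto_prod_nat
  have htendq3 : Filter.Tendsto (fun n => pp q (3 * n)) Filter.atTop (nhds P) := by
    have h1 : Filter.Tendsto (fun n => pp q n) Filter.atTop (nhds P) :=
      mq.hasProd.tendsto_prod_nat
    exact h1.comp (Filter.tendsto_atTop_atTop.mpr fun b => ⟨b, fun a ha => by omega⟩)
  obtain ⟨B, hB⟩ : ∃ B : ℝ, ∀ j, ‖pp Q j‖ ≤ B := by
    obtain ⟨B, hB⟩ := (htendQ.norm).bddAbove_range
    exact ⟨B, fun j => hB (Set.mem_range_self j)⟩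
  obtain ⟨M, hM⟩ : ∃ M : ℝ, ∀ j, ‖pp Q j‖⁻¹ ≤ M := by
    have h2 : Filter.Tendsto (fun j => ‖pp Q j‖⁻¹) Filter.atTop (nhds ‖L‖⁻¹) :=
      ((htendQ.norm).inv₀ (by simpa using hLne))
    obtain ⟨M, hM⟩ := h2.bddAbove_range
    exact ⟨M, fun j => hM (Set.mem_range_self j)⟩
  have hppQpos : ∀ j, (0 : ℝ) < ‖pp Q j‖ := fun j => norm_pos_iff.mpr (pp_ne_zero hQ1 j)
  have hMpos : (0 : ℝ) < M :=
    lt_of_lt_of_le (by rw [inv_pos]; exact hppQpos 0) (hM 0)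
  have hlow : ∀ j, M⁻¹ ≤ ‖pp Q j‖ := fun j =>
    (inv_le_comm₀ hMpos (hppQpos j)).mpr (hM j)
  have hBpos : (0 : ℝ) < B := lt_of_lt_of_le (hppQpos 0) (hB 0)
  set C : ℝ := (B * B) * (M * M) with hC
  set F : ℕ → ℤ → ℂ := fun n m =>
    if m.natAbs ≤ n then
      (-1 : ℂ) ^ m * q ^ (pent m) * (gb Q (2 * n) ((m + n).toNat) * pp Q n)
    else 0 with hF
  have hFsum : ∀ n : ℕ, pp q (3 * n) = ∑' m : ℤ, F n m := by
    intro n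
    have h1 : ∑' m : ℤ, F n m = ∑ m ∈ Finset.Icc (-(n : ℤ)) n, F n m := by
      refine tsum_eq_sum fun m hm => ?_
      simp only [hF]
      rw [if_neg]
      rw [Finset.mem_Icc] at hm
      omega
    have hmap : Finset.Icc (-(n : ℤ)) n
        = (Finset.range (2 * n + 1)).map ⟨fun k : ℕ => (k : ℤ) - n, show Function.Injective _ from by intro a b h; simp only at h; omega⟩ := by
      ext m
      simp only [Finset.mem_Icc, Finset.mem_map, Finset.mem_range, Function.Embedding.coeFn_mk]
      constructor
      · intro hm
        exact ⟨(m + n).toNat, by omega, by omega⟩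
      · rintro ⟨k, hk, rfl⟩
        omega
    rw [h1, hmap, Finset.sum_map, key q hq0 n]
    refine Finset.sum_congr rfl fun k hk => ?_
    rw [Finset.mem_range] at hk
    simp only [hF, Function.Embedding.coeFn_mk]
    rw [if_pos (by omega : ((k : ℤ) - n).natAbs ≤ n)]
    have htn : (((k : ℤ) - n) + n).toNat = k := by omega
    rw [htn]
    have hsgn : ((-1 : ℂ)) ^ ((k : ℤ) - n) = (-1 : ℂ) ^ (k + n) := by
      have hne : (-1 : ℂ) ≠ 0 := by norm_num
      have e1 : ((k : ℤ) - n) = ((k + n : ℕ) : ℤ) - ((2 * n : ℕ) : ℤ) := by push_cast; ring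
      rw [e1, zpow_sub₀ hne, zpow_natCast, zpow_natCast]
      have e2 : (-1 : ℂ) ^ (2 * n) = 1 := by
        rw [pow_mul]; norm_num
      rw [e2, div_one]
    rw [hsgn]
  have hlim : ∀ m : ℤ, Filter.Tendsto (fun n => F n m) Filter.atTop
      (nhds ((-1 : ℂ) ^ m * q ^ (pent m))) := by
    intro m
    have hratio : Filter.Tendsto
        (fun n : ℕ => pp Q (2 * n) * pp Q n / (pp Q ((m + n).toNat) * pp Q ((n - m).toNat)))
        Filter.atTop (nhds 1) := by
      have hnum : Filter.Tendsto (fun n : ℕ => pp Q (2 * n) * pp Q n)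
          Filter.atTop (nhds (L * L)) :=
        Filter.Tendsto.mul
          (htendQ.comp (Filter.tendsto_atTop_atTop.mpr fun b => ⟨b, fun a ha => by omega⟩))
          htendQ
      have hden : Filter.Tendsto
          (fun n : ℕ => pp Q ((m + n).toNat) * pp Q ((n - m).toNat))
          Filter.atTop (nhds (L * L)) :=
        Filter.Tendsto.mul
          (htendQ.comp (Filter.tendsto_atTop_atTop.mpr
            fun b => ⟨b + m.natAbs, fun a ha => by omega⟩))
          (htendQ.comp (Filter.tendsto_atTop_atTop.mpr
            fun b => ⟨b + m.natAbs, fun a ha => by omega⟩))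
      have h3 := hnum.div hden (mul_ne_zero hLne hLne)
      simpa [div_self (mul_ne_zero hLne hLne), Pi.div_def] using h3
    have heq : ∀ᶠ n in Filter.atTop, ((-1 : ℂ) ^ m * q ^ (pent m)) *
        (pp Q (2 * n) * pp Q n / (pp Q ((m + n).toNat) * pp Q ((n - m).toNat))) = F n m := by
      rw [Filter.eventually_atTop]
      refine ⟨m.natAbs, fun n hn => ?_⟩
      simp only [hF]
      rw [if_pos hn]
      have hgb : gb Q (2 * n) ((m + n).toNat)
          = pp Q (2 * n) / (pp Q ((m + n).toNat) * pp Q ((n - m).toNat)) :=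
        gb_div Q hQ1 (by omega)
      rw [hgb]
      ring
    have h4 := (hratio.const_mul ((-1 : ℂ) ^ m * q ^ (pent m))).congr' heq
    simpa using h4
  have hbd : ∀ n : ℕ, ∀ m : ℤ, ‖F n m‖ ≤ C * ‖q‖ ^ m.natAbs := by
    intro n m
    simp only [hF]
    by_cases hcase : m.natAbs ≤ n
    · rw [if_pos hcase]
      have hgb : gb Q (2 * n) ((m + n).toNat)
          = pp Q (2 * n) / (pp Q ((m + n).toNat) * pp Q ((n - m).toNat)) :=
        gb_div Q hQ1 (by omega)
      rw [hgb]
      have h1 : ‖(-1 : ℂ) ^ m‖ = 1 := by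
        rw [norm_zpow]
        norm_num
      have h2 : ‖q ^ (pent m)‖ ≤ ‖q‖ ^ m.natAbs := by
        rw [norm_zpow]
        calc ‖q‖ ^ pent m ≤ ‖q‖ ^ ((m.natAbs : ℤ)) :=
              zpow_le_zpow_right_of_le_one₀ hq1' (le_of_lt hq1) (pent_ge_natAbs m)
          _ = ‖q‖ ^ m.natAbs := by rw [zpow_natCast]
      have hX : ‖pp Q (2 * n) / (pp Q ((m + n).toNat) * pp Q ((n - m).toNat)) * pp Q n‖
          ≤ C := by
        rw [norm_mul, norm_div, norm_mul]
        have hden : M⁻¹ * M⁻¹ ≤ ‖pp Q ((m + n).toNat)‖ * ‖pp Q ((n - m).toNat)‖ :=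
          mul_le_mul (hlow _) (hlow _) (by positivity) (le_of_lt (hppQpos _))
        have hnum : ‖pp Q (2 * n)‖ * ‖pp Q n‖ ≤ B * B :=
          mul_le_mul (hB _) (hB _) (le_of_lt (hppQpos _)) (le_of_lt hBpos)
        calc ‖pp Q (2 * n)‖ / (‖pp Q ((m + n).toNat)‖ * ‖pp Q ((n - m).toNat)‖) * ‖pp Q n‖
            = ‖pp Q (2 * n)‖ * ‖pp Q n‖
                / (‖pp Q ((m + n).toNat)‖ * ‖pp Q ((n - m).toNat)‖) := by ring
          _ ≤ (B * B) / (M⁻¹ * M⁻¹) :=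
              div_le_div₀ (by positivity) hnum (by positivity) hden
          _ = C := by rw [hC]; field_simp
      calc ‖(-1 : ℂ) ^ m * q ^ pent m *
              (pp Q (2 * n) / (pp Q ((m + n).toNat) * pp Q ((n - m).toNat)) * pp Q n)‖
          = ‖(-1 : ℂ) ^ m‖ * ‖q ^ pent m‖ *
              ‖pp Q (2 * n) / (pp Q ((m + n).toNat) * pp Q ((n - m).toNat)) * pp Q n‖ := by
            rw [norm_mul, norm_mul]
        _ = ‖q ^ pent m‖ *
              ‖pp Q (2 * n) / (pp Q ((m + n).toNat) * pp Q ((n - m).toNat)) * pp Q n‖ := by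
            rw [h1, one_mul]
        _ ≤ ‖q‖ ^ m.natAbs * C :=
            mul_le_mul h2 hX (norm_nonneg _) (by positivity)
        _ = C * ‖q‖ ^ m.natAbs := by ring
    · rw [if_neg hcase]
      simp only [norm_zero]
      positivity
  have hsumbd : Summable (fun m : ℤ => C * ‖q‖ ^ m.natAbs) := by
    apply Summable.mul_left
    apply Summable.of_nat_of_neg
    · exact Summable.congr (summable_geometric_of_lt_one (norm_nonneg q) hq1)
        (fun k => by simp)
    · exact Summable.congr (summable_geometric_of_lt_one (norm_nonneg q) hq1)
        (fun k => by simp)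
  have htan := tendsto_tsum_of_dominated_convergence hsumbd hlim
    (Filter.Eventually.of_forall hbd)
  have htan' : Filter.Tendsto (fun n => pp q (3 * n)) Filter.atTop
      (nhds (∑' m : ℤ, (-1 : ℂ) ^ m * q ^ (pent m))) :=
    htan.congr fun n => (hFsum n).symm
  exact tendsto_nhds_unique htendq3 htan'

end PNT16A

end

open PNT16 PNT16X PNT16A in
/-- Euler's pentagonal number theorem in theta form:
`η(τ) = q^{1/24} ∏_{n≥1}(1-qⁿ) = q^{1/24} ∑_{n∈ℤ} (-1)ⁿ q^{n(3n+1)/2}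
      = e^{-iπ/6} θ[1/6;1/2](0;3τ)`,
where `q = e^{2πiτ}` and `θ[a;b](0;τ) = ∑_{n∈ℤ} e^{2πi(n+a)b} e^{πiτ(n+a)²}`. -/
theorem stmt16 (τ : ℂ) (hτ : 0 < τ.im)
    (q : ℂ) (hq : q = Complex.exp (2 * Real.pi * I * τ))
    (η : ℂ) (hη : η = Complex.exp (2 * Real.pi * I * τ / 24) * ∏' n : ℕ, (1 - q^(n+1))) :
    η = Complex.exp (2 * Real.pi * I * τ / 24) *
          ∑' n : ℤ, (-1 : ℂ)^n * Complex.exp (2 * Real.pi * I * τ * ((n : ℂ)*(3*(n : ℂ)+1)/2)) ∧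
    η = Complex.exp (-(Real.pi * I / 6)) *
          ∑' n : ℤ, Complex.exp (2 * Real.pi * I * ((n : ℂ) + 1/6) * (1/2)) *
            Complex.exp (Real.pi * I * (3*τ) * ((n : ℂ) + 1/6)^2) := by
  have hq0 : q ≠ 0 := by rw [hq]; exact Complex.exp_ne_zero _
  have hq1 : ‖q‖ < 1 := by
    rw [hq, Complex.norm_exp]
    rw [Real.exp_lt_one_iff]
    have hre : (2 * (Real.pi : ℂ) * I * τ) = ((2 * Real.pi : ℝ) : ℂ) * (τ * I) := by
      push_cast; ring
    rw [hre, Complex.re_ofReal_mul, Complex.mul_I_re]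
    have hpi : (0 : ℝ) < 2 * Real.pi := by positivity
    nlinarith
  have hP := pnt q hq0 hq1
  have hne1 : (-1 : ℂ) ≠ 0 := by norm_num
  have hnegpow : ∀ n : ℤ, ((-1 : ℂ)) ^ (-n) = (-1 : ℂ) ^ n := by
    intro n
    rw [zpow_neg]
    refine inv_eq_of_mul_eq_one_right ?_
    rw [← zpow_add₀ hne1]
    have h2 : n + n = 2 * n := by ring
    rw [h2, zpow_mul]
    norm_num
  have hterm : ∀ n : ℤ, ((fun m : ℤ => (-1 : ℂ) ^ m * q ^ (pent m)) (-n))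
      = (-1 : ℂ)^n * Complex.exp (2 * Real.pi * I * τ * ((n : ℂ)*(3*(n : ℂ)+1)/2)) := by
    intro n
    simp only
    rw [hnegpow]
    congr 1
    have h2p := two_mul_pent (-n)
    have hc : ((pent (-n) : ℤ) : ℂ) * 2 = (n : ℂ) * (3 * (n : ℂ) + 1) := by
      have := congrArg (fun t : ℤ => (t : ℂ)) h2p
      push_cast at this
      linear_combination this
    rw [hq, ← Complex.exp_int_mul]
    congr 1
    linear_combination ((Real.pi : ℂ) * I * τ) * hc
  have hsum1 : ∑' n : ℤ, (-1 : ℂ)^n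
        * Complex.exp (2 * Real.pi * I * τ * ((n : ℂ)*(3*(n : ℂ)+1)/2))
      = ∑' m : ℤ, (-1 : ℂ) ^ m * q ^ (pent m) := by
    rw [← (Equiv.neg ℤ).tsum_eq (fun m : ℤ => (-1 : ℂ) ^ m * q ^ (pent m))]
    refine tsum_congr fun n => ?_
    simp only [Equiv.neg_apply]
    exact (hterm n).symm
  have part1 : η = Complex.exp (2 * Real.pi * I * τ / 24) *
      ∑' n : ℤ, (-1 : ℂ)^n * Complex.exp (2 * Real.pi * I * τ * ((n : ℂ)*(3*(n : ℂ)+1)/2)) := by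
    rw [hη, hsum1, hP]
  refine ⟨part1, ?_⟩
  rw [part1, ← tsum_mul_left, ← tsum_mul_left]
  refine tsum_congr fun n => ?_
  have hm1 : ((-1 : ℂ)) ^ n = Complex.exp ((n : ℂ) * (Real.pi * I)) := by
    rw [Complex.exp_int_mul, Complex.exp_pi_mul_I]
  rw [hm1, ← Complex.exp_add, ← Complex.exp_add, ← Complex.exp_add, ← Complex.exp_add]
  congr 1
  push_cast
  ring
end

section
/- Define S_ℓ(q) as the formal double sum (∑_{m,n ≥ 0} - ∑_{m,n < 0}) (-1)^{m+ℓ} q^{(1/2)(m + 2n - ℓ + 1/2)² - (n - ℓ/2)²} over integers m, n, for fixed ℓ ∈ ℤ. Then S_{ℓ+2}(q) = S_ℓ(q): the double series for ℓ and for ℓ+2 agree term by term after the bijection (m,n) ↦ (m, n+1) on the index set (with the appropriate boundary terms reorganized), i.e. the two series define the same q-expansion. -/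
open Complex

/-- The exponent `Q_ℓ(m,n) = (1/2)(m + 2n - ℓ + 1/2)² - (n - ℓ/2)²`. -/
noncomputable def Qexp (ℓ m n : ℤ) : ℝ :=
  (1/2) * ((m : ℝ) + 2*(n : ℝ) - (ℓ : ℝ) + 1/2)^2 - ((n : ℝ) - (ℓ : ℝ)/2)^2

/-- The series `S_ℓ(τ) = (∑_{m,n≥0} - ∑_{m,n<0}) (-1)^{m+ℓ} q^{Q_ℓ(m,n)}` with
`q = e^{2πiτ}`; the sum over `m,n < 0` is parametrized by `m = -1-m'`, `n = -1-n'`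
with `m', n' ∈ ℕ`. -/
noncomputable def Sser (ℓ : ℤ) (τ : ℂ) : ℂ :=
  (∑' p : ℕ × ℕ, (-1 : ℂ)^((p.1 : ℤ) + ℓ) *
      Complex.exp (2 * Real.pi * I * τ * (Qexp ℓ (p.1 : ℤ) (p.2 : ℤ) : ℂ))) -
  (∑' p : ℕ × ℕ, (-1 : ℂ)^((-1 - (p.1 : ℤ)) + ℓ) *
      Complex.exp (2 * Real.pi * I * τ * (Qexp ℓ (-1 - (p.1 : ℤ)) (-1 - (p.2 : ℤ)) : ℂ)))

/-- The general term of the series. -/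
noncomputable def Tm (ℓ : ℤ) (τ : ℂ) (m n : ℤ) : ℂ :=
  (-1 : ℂ)^(m + ℓ) * Complex.exp (2 * Real.pi * I * τ * (Qexp ℓ m n : ℂ))

lemma Sser_eq (ℓ : ℤ) (τ : ℂ) :
    Sser ℓ τ = (∑' p : ℕ × ℕ, Tm ℓ τ p.1 p.2) -
      ∑' p : ℕ × ℕ, Tm ℓ τ (-1 - (p.1 : ℤ)) (-1 - (p.2 : ℤ)) := rfl

lemma Qexp_shift (ℓ m n : ℤ) : Qexp (ℓ + 2) m n = Qexp ℓ m (n - 1) := by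
  unfold Qexp; push_cast; ring

lemma Qexp_negneg (ℓ m n : ℤ) : Qexp ℓ (-1 - m) (-1 - n) = Qexp (-ℓ - 2) m n := by
  unfold Qexp; push_cast; ring

lemma Qexp_refl (ℓ m : ℤ) : Qexp ℓ (2*ℓ + 3 - m) (-1) = Qexp ℓ m (-1) := by
  unfold Qexp; push_cast; ring

lemma neg_one_zpow_add_two (a : ℤ) : (-1 : ℂ)^(a + 2) = (-1 : ℂ)^a := by
  rw [zpow_add₀ (by norm_num : (-1 : ℂ) ≠ 0)]; norm_num

lemma Tm_shift (ℓ : ℤ) (τ : ℂ) (m n : ℤ) : Tm (ℓ + 2) τ m n = Tm ℓ τ m (n - 1) := by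
  unfold Tm
  rw [Qexp_shift, show m + (ℓ + 2) = (m + ℓ) + 2 by ring, neg_one_zpow_add_two]

lemma Tm_refl (ℓ : ℤ) (τ : ℂ) (m : ℤ) :
    Tm ℓ τ (2*ℓ + 3 - m) (-1) = - Tm ℓ τ m (-1) := by
  unfold Tm
  rw [Qexp_refl, ← neg_mul]
  congr 1
  have h : (2*ℓ + 3 - m) + ℓ = (m + ℓ) + 2*(ℓ + 1 - m) + 1 := by ring
  rw [h, zpow_add₀ (by norm_num : (-1 : ℂ) ≠ 0),
    zpow_add₀ (by norm_num : (-1 : ℂ) ≠ 0),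
    (even_two_mul (ℓ + 1 - m)).neg_one_zpow]
  norm_num

lemma Tm_norm (ℓ : ℤ) (τ : ℂ) (m n : ℤ) :
    ‖Tm ℓ τ m n‖ = Real.exp (-(2 * Real.pi * τ.im) * Qexp ℓ m n) := by
  unfold Tm
  rw [norm_mul, norm_zpow, norm_neg, norm_one, one_zpow, one_mul,
    Complex.norm_exp]
  congr 1
  simp [Complex.mul_re, Complex.mul_im]

/-- 2-dimensional summability of the norms. -/
lemma summable_norm2 {t : ℝ} (ht : 0 < t) (ℓ : ℤ) :
    Summable (fun p : ℕ × ℕ => Real.exp (-t * Qexp ℓ p.1 p.2)) := by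
  set C : ℝ := ((ℓ : ℝ) + 1/2)^2/2 + (ℓ : ℝ)^2/2 - ((ℓ : ℝ) - 1/2)^2/2 with hC
  have hQ : ∀ m n : ℕ, (m : ℝ) + (n : ℝ) - C ≤ Qexp ℓ m n := by
    intro m n
    unfold Qexp
    push_cast
    nlinarith [sq_nonneg ((m : ℝ) - (ℓ : ℝ) - 1/2), sq_nonneg ((n : ℝ) - (ℓ : ℝ)/2),
      mul_nonneg (Nat.cast_nonneg m : (0:ℝ) ≤ m) (Nat.cast_nonneg n : (0:ℝ) ≤ n)]
  have hr0 : (0:ℝ) ≤ Real.exp (-t) := (Real.exp_pos _).le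
  have hr1 : Real.exp (-t) < 1 := Real.exp_lt_one_iff.mpr (by linarith)
  have hg : Summable (fun p : ℕ × ℕ =>
      Real.exp (t * C) * (Real.exp (-t) ^ p.1 * Real.exp (-t) ^ p.2)) :=
    (((summable_geometric_of_lt_one hr0 hr1).mul_of_nonneg
      (summable_geometric_of_lt_one hr0 hr1)
      (fun n => pow_nonneg hr0 n) (fun n => pow_nonneg hr0 n))).mul_left _
  refine Summable.of_nonneg_of_le (fun p => (Real.exp_pos _).le) (fun p => ?_) hg
  rw [← Real.exp_nat_mul, ← Real.exp_nat_mul, ← Real.exp_add, ← Real.exp_add]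
  apply Real.exp_le_exp.mpr
  have := hQ p.1 p.2
  nlinarith [hQ p.1 p.2]

/-- 1-dimensional summability of the norms, for a fixed second index. -/
lemma summable_norm1 {t : ℝ} (ht : 0 < t) (ℓ n₀ : ℤ) :
    Summable (fun m : ℕ => Real.exp (-t * Qexp ℓ m n₀)) := by
  set C : ℝ := ((n₀ : ℝ) - (ℓ : ℝ)/2)^2 - (2*(n₀ : ℝ) - (ℓ : ℝ) + 1/2) + 1/2 with hC
  have hQ : ∀ m : ℕ, (m : ℝ) - C ≤ Qexp ℓ m n₀ := by
    intro m
    unfold Qexp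
    push_cast
    nlinarith [sq_nonneg ((m : ℝ) + 2*(n₀ : ℝ) - (ℓ : ℝ) - 1/2)]
  have hr0 : (0:ℝ) ≤ Real.exp (-t) := (Real.exp_pos _).le
  have hr1 : Real.exp (-t) < 1 := Real.exp_lt_one_iff.mpr (by linarith)
  have hg : Summable (fun m : ℕ => Real.exp (t * C) * Real.exp (-t) ^ m) :=
    (summable_geometric_of_lt_one hr0 hr1).mul_left _
  refine Summable.of_nonneg_of_le (fun m => (Real.exp_pos _).le) (fun m => ?_) hg
  rw [← Real.exp_nat_mul, ← Real.exp_add]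
  apply Real.exp_le_exp.mpr
  nlinarith [hQ m]

attribute [irreducible] Tm Qexp

set_option maxHeartbeats 1000000 in
/-- `S_{ℓ+2}(q) = S_ℓ(q)`. -/
theorem stmt19 (ℓ : ℤ) (τ : ℂ) (hτ : 0 < τ.im) :
    Sser (ℓ + 2) τ = Sser ℓ τ := by
  have ht : 0 < 2 * Real.pi * τ.im := by positivity
  -- complex summability lemmas
  have hS1 : ∀ L : ℤ, Summable (fun p : ℕ × ℕ => Tm L τ (p.1 : ℤ) (p.2 : ℤ)) := by
    intro L
    refine Summable.of_norm ?_
    simpa only [Tm_norm] using summable_norm2 ht L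
  have hS2 : ∀ L : ℤ, Summable (fun p : ℕ × ℕ => Tm L τ (-1 - (p.1 : ℤ)) (-1 - (p.2 : ℤ))) := by
    intro L
    refine Summable.of_norm ?_
    simpa only [Tm_norm, Qexp_negneg] using summable_norm2 ht (-L - 2)
  have hS3 : Summable (fun m : ℕ => Tm ℓ τ (m : ℤ) (-1)) := by
    refine Summable.of_norm ?_
    simpa only [Tm_norm] using summable_norm1 ht ℓ (-1)
  have hS4 : Summable (fun m : ℕ => Tm ℓ τ (-1 - (m : ℤ)) (-1)) := by
    refine Summable.of_norm ?_
    have : ∀ m : ℕ, Qexp ℓ (-1 - (m : ℤ)) (-1) = Qexp (-ℓ - 2) m 0 := by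
      intro m
      have := Qexp_negneg ℓ m 0
      simpa using this
    simpa only [Tm_norm, this] using summable_norm1 ht (-ℓ - 2) 0
  -- abbreviations
  set A : ℂ := ∑' p : ℕ × ℕ, Tm ℓ τ (p.1 : ℤ) (p.2 : ℤ) with hA
  set B : ℂ := ∑' p : ℕ × ℕ, Tm ℓ τ (-1 - (p.1 : ℤ)) (-1 - (p.2 : ℤ)) with hB
  set A' : ℂ := ∑' p : ℕ × ℕ, Tm (ℓ + 2) τ (p.1 : ℤ) (p.2 : ℤ) with hA'
  set B' : ℂ := ∑' p : ℕ × ℕ, Tm (ℓ + 2) τ (-1 - (p.1 : ℤ)) (-1 - (p.2 : ℤ)) with hB'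
  set P : ℂ := ∑' m : ℕ, Tm ℓ τ (m : ℤ) (-1) with hP
  set N : ℂ := ∑' m : ℕ, Tm ℓ τ (-1 - (m : ℤ)) (-1) with hN
  -- Step 1 : A' = P + A
  have step1 : A' = P + A := by
    have hfib : ∀ m : ℕ, HasSum (fun n : ℕ => Tm (ℓ + 2) τ (m : ℤ) (n : ℤ))
        ((∑' n : ℕ, Tm ℓ τ (m : ℤ) (n : ℤ)) + Tm ℓ τ (m : ℤ) (-1)) := by
      intro m
      have hsm : Summable (fun n : ℕ => Tm ℓ τ (m : ℤ) (n : ℤ)) := (hS1 ℓ).prod_factor m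
      have key : HasSum (fun n : ℕ => (fun k : ℕ => Tm ℓ τ (m : ℤ) ((k : ℤ) - 1)) (n + 1))
          (∑' n : ℕ, Tm ℓ τ (m : ℤ) (n : ℤ)) := by
        have : (fun n : ℕ => (fun k : ℕ => Tm ℓ τ (m : ℤ) ((k : ℤ) - 1)) (n + 1)) =
            fun n : ℕ => Tm ℓ τ (m : ℤ) (n : ℤ) := by
          funext n; congr 1; push_cast; ring
        rw [this]; exact hsm.hasSum
      have h2 := (hasSum_nat_add_iff (f := fun k : ℕ => Tm ℓ τ (m : ℤ) ((k : ℤ) - 1)) 1).mp key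
      simp only [Finset.range_one, Finset.sum_singleton, Nat.cast_zero] at h2
      have h3 : (fun k : ℕ => Tm ℓ τ (m : ℤ) ((k : ℤ) - 1)) =
          fun k : ℕ => Tm (ℓ + 2) τ (m : ℤ) (k : ℤ) := by
        funext k; rw [Tm_shift]
      rw [h3] at h2
      convert h2 using 2 <;> norm_num <;> rfl
    have h1 : HasSum (fun m : ℕ => (∑' n : ℕ, Tm ℓ τ (m : ℤ) (n : ℤ)) + Tm ℓ τ (m : ℤ) (-1))
        A' := (hS1 (ℓ + 2)).hasSum.prod_fiberwise hfib
    have h2 : HasSum (fun m : ℕ => ∑' n : ℕ, Tm ℓ τ (m : ℤ) (n : ℤ)) A :=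
      (hS1 ℓ).hasSum.prod_fiberwise (fun m => ((hS1 ℓ).prod_factor m).hasSum)
    have h3 := h2.add hS3.hasSum
    have := h1.unique h3
    rw [this]; ring
  -- Step 2 : B = B' + N
  have step2 : B = B' + N := by
    have hfib : ∀ m : ℕ, HasSum (fun n : ℕ => Tm ℓ τ (-1 - (m : ℤ)) (-1 - (n : ℤ)))
        ((∑' n : ℕ, Tm (ℓ + 2) τ (-1 - (m : ℤ)) (-1 - (n : ℤ))) + Tm ℓ τ (-1 - (m : ℤ)) (-1)) := by
      intro m
      have hsm : Summable (fun n : ℕ => Tm (ℓ + 2) τ (-1 - (m : ℤ)) (-1 - (n : ℤ))) :=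
        (hS2 (ℓ + 2)).prod_factor m
      have key : HasSum (fun n : ℕ => (fun k : ℕ => Tm ℓ τ (-1 - (m : ℤ)) (-1 - (k : ℤ))) (n + 1))
          (∑' n : ℕ, Tm (ℓ + 2) τ (-1 - (m : ℤ)) (-1 - (n : ℤ))) := by
        have : (fun n : ℕ => (fun k : ℕ => Tm ℓ τ (-1 - (m : ℤ)) (-1 - (k : ℤ))) (n + 1)) =
            fun n : ℕ => Tm (ℓ + 2) τ (-1 - (m : ℤ)) (-1 - (n : ℤ)) := by
          funext n; rw [Tm_shift]; congr 1; push_cast; ring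
        rw [this]; exact hsm.hasSum
      have h2 := (hasSum_nat_add_iff
        (f := fun k : ℕ => Tm ℓ τ (-1 - (m : ℤ)) (-1 - (k : ℤ))) 1).mp key
      simp only [Finset.range_one, Finset.sum_singleton, Nat.cast_zero] at h2
      convert h2 using 2 <;> norm_num <;> rfl
    have h1 : HasSum (fun m : ℕ =>
        (∑' n : ℕ, Tm (ℓ + 2) τ (-1 - (m : ℤ)) (-1 - (n : ℤ))) + Tm ℓ τ (-1 - (m : ℤ)) (-1))
        B := (hS2 ℓ).hasSum.prod_fiberwise hfib
    have h2 : HasSum (fun m : ℕ => ∑' n : ℕ, Tm (ℓ + 2) τ (-1 - (m : ℤ)) (-1 - (n : ℤ))) B' :=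
      (hS2 (ℓ + 2)).hasSum.prod_fiberwise (fun m => ((hS2 (ℓ + 2)).prod_factor m).hasSum)
    exact h1.unique (h2.add hS4.hasSum)
  -- Step 3 : P + N = 0
  have step3 : P + N = 0 := by
    have hneg : HasSum (fun n : ℕ => Tm ℓ τ (-((n : ℤ) + 1)) (-1)) N := by
      have : (fun n : ℕ => Tm ℓ τ (-((n : ℤ) + 1)) (-1)) =
          fun n : ℕ => Tm ℓ τ (-1 - (n : ℤ)) (-1) := by
        funext n; congr 1; ring
      rw [this]; exact hS4.hasSum
    have hZ : HasSum (fun m : ℤ => Tm ℓ τ m (-1)) (P + N) :=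
      HasSum.of_nat_of_neg_add_one hS3.hasSum hneg
    have htot := hZ.tsum_eq
    have hinv := (Equiv.subLeft (2*ℓ + 3)).tsum_eq (fun m : ℤ => Tm ℓ τ m (-1))
    simp only [Equiv.subLeft_apply, Tm_refl, tsum_neg] at hinv
    have hzero : ∑' m : ℤ, Tm ℓ τ m (-1) = 0 := by
      have h2 : (2 : ℂ) * ∑' m : ℤ, Tm ℓ τ m (-1) = 0 := by linear_combination -hinv
      exact (mul_eq_zero.mp h2).resolve_left two_ne_zero
    rw [htot] at hzero
    exact hzero
  -- conclude
  rw [Sser_eq, Sser_eq, ← hA, ← hB, ← hA', ← hB']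
  linear_combination step1 + step2 + step3
end
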